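/- arXiv:2109.04525 — 5 statements merged into one kernel-verified Lean document; each statement's English description precedes it below -/
import Mathlib

section
/- Let f : {-1,1}^n → {0,1}, let S ⊆ [n], and for an assignment x_{S̄} ∈ {-1,1}^{[n]∖S} let f_{S|x_{S̄}} denote the restriction of f to the free variables S. Then |f̂(S)| ≤ Pr_{x_{S̄} uniform}[DT(f_{S|x_{S̄}}) = |S|]. -/
open Finset

noncomputable section

/-- The character `χ_S(x) = ∏_{i ∈ S} x_i`, where `x i = true` encodes `-1`. -/
def chi {n : ℕ} (S : Finset (Fin n)) (x : Fin n → Bool) : ℝ :=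
  ∏ i ∈ S, (if x i then (-1 : ℝ) else 1)

/-- Fourier coefficient `f̂(S) = E_x [f(x) χ_S(x)]` over uniform `x ∈ {-1,1}^n`. -/
def fhat {n : ℕ} (f : (Fin n → Bool) → ℝ) (S : Finset (Fin n)) : ℝ :=
  (∑ x : Fin n → Bool, f x * chi S x) / 2 ^ n

/-- View a `{0,1}`-valued Boolean function as real-valued. -/
def bToR (b : Bool) : ℝ := if b then 1 else 0

open scoped Classical in
/-- Probability of an event under the uniform distribution on `{-1,1}^n`. -/
def pr {n : ℕ} (P : (Fin n → Bool) → Prop) : ℝ :=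
  ((Finset.univ.filter P).card : ℝ) / 2 ^ n

end
/-- Binary decision trees querying variables in `Fin n`. -/
inductive DTree (n : ℕ) : Type where
  | leaf : Bool → DTree n
  | node : Fin n → DTree n → DTree n → DTree n

def DTree.eval {n : ℕ} : DTree n → (Fin n → Bool) → Bool
  | .leaf b, _ => b
  | .node i t₁ t₀, x => if x i then t₁.eval x else t₀.eval x

def DTree.depth {n : ℕ} : DTree n → ℕ
  | .leaf _ => 0
  | .node _ t₁ t₀ => max t₁.depth t₀.depth + 1

/-- Decision tree depth of a Boolean function: least depth of a tree computing it. -/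
noncomputable def DT {n : ℕ} (g : (Fin n → Bool) → Bool) : ℕ :=
  sInf {d | ∃ t : DTree n, (∀ x, t.eval x = g x) ∧ t.depth ≤ d}

/-- Restriction of `f` with free variables `S`, the others fixed according to `xbar`. -/
def restrict {n : ℕ} (f : (Fin n → Bool) → Bool) (S : Finset (Fin n))
    (xbar : Fin n → Bool) : (Fin n → Bool) → Bool :=
  fun xS => f (fun i => if i ∈ S then xS i else xbar i)

-- helper lemmas
lemma chi_congr {n : ℕ} (S : Finset (Fin n)) {x y : Fin n → Bool}
    (h : ∀ i ∈ S, x i = y i) : chi S x = chi S y := by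
  unfold chi; exact Finset.prod_congr rfl fun i hi => by rw [h i hi]

lemma chi_abs_le {n : ℕ} (S : Finset (Fin n)) (x : Fin n → Bool) : |chi S x| ≤ 1 := by
  unfold chi
  rw [Finset.abs_prod]
  calc ∏ i ∈ S, |if x i then (-1:ℝ) else 1| = ∏ i ∈ S, 1 := by
        refine Finset.prod_congr rfl fun i _ => ?_
        by_cases h : x i <;> simp [h]
    _ ≤ 1 := by simp

lemma chi_mul {n : ℕ} (S : Finset (Fin n)) (i : Fin n) (x : Fin n → Bool) :
    (if x i then (-1:ℝ) else 1) * chi S x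
      = chi (if i ∈ S then S.erase i else insert i S) x := by
  have hsplit : ∀ (T : Finset (Fin n)) (j : Fin n), j ∈ T →
      chi T x = (if x j then (-1:ℝ) else 1) * chi (T.erase j) x := by
    intro T j hj; unfold chi; exact (Finset.mul_prod_erase T _ hj).symm
  by_cases h : i ∈ S
  · simp only [h, if_true]
    rw [hsplit S i h, ← mul_assoc]
    have : (if x i then (-1:ℝ) else 1) * (if x i then (-1:ℝ) else 1) = 1 := by
      by_cases hx : x i <;> simp [hx]
    rw [this, one_mul]
  · simp only [h, if_false]
    simp [chi, Finset.prod_insert h]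

lemma sum_chi_zero {n : ℕ} (S : Finset (Fin n)) (hS : S.Nonempty) :
    ∑ x : Fin n → Bool, chi S x = 0 := by
  obtain ⟨i₀, hi₀⟩ := hS
  have hneg : ∀ x : Fin n → Bool, chi S (Function.update x i₀ (!x i₀)) = - chi S x := by
    intro x
    have hsplit : ∀ (y : Fin n → Bool),
        chi S y = (if y i₀ then (-1:ℝ) else 1) * chi (S.erase i₀) y := by
      intro y; unfold chi; exact (Finset.mul_prod_erase S _ hi₀).symm
    have h1 : chi S (Function.update x i₀ (!x i₀))
        = (if !(x i₀) then (-1:ℝ) else 1) * chi (S.erase i₀) x := by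
      rw [hsplit]
      rw [Function.update_self]
      congr 1
      exact chi_congr _ fun j hj => Function.update_of_ne (Finset.ne_of_mem_erase hj) _ _
    have h2 : chi S x = (if x i₀ then (-1:ℝ) else 1) * chi (S.erase i₀) x := hsplit x
    rw [h1, h2]
    by_cases hx : x i₀ <;> simp [hx]
  have hbij : Function.Bijective (fun x : Fin n → Bool => Function.update x i₀ (!x i₀)) := by
    apply Function.Involutive.bijective
    intro x
    funext j
    by_cases hj : j = i₀
    · subst hj; simp
    · simp [Function.update_of_ne hj]
  have := Fintype.sum_bijective _ hbij
    (fun x : Fin n → Bool => chi S (Function.update x i₀ (!x i₀)))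
    (fun x => chi S x) (fun x => rfl)
  have h2 : ∑ x : Fin n → Bool, chi S (Function.update x i₀ (!x i₀))
      = - ∑ x : Fin n → Bool, chi S x := by
    rw [← Finset.sum_neg_distrib]
    exact Finset.sum_congr rfl fun x _ => hneg x
  linarith [this, h2]

def bigT {n : ℕ} : List (Fin n) → ((Fin n → Bool) → Bool) → DTree n
  | [], g => .leaf (g fun _ => false)
  | i :: L, g => .node i (bigT L fun x => g (Function.update x i true))
                         (bigT L fun x => g (Function.update x i false))

lemma bigT_eval {n : ℕ} (L : List (Fin n)) (g : (Fin n → Bool) → Bool) (x : Fin n → Bool) :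
    (bigT L g).eval x = g (fun i => if i ∈ L then x i else false) := by
  induction L generalizing g with
  | nil => simp [bigT, DTree.eval]
  | cons i L ih =>
    simp only [bigT, DTree.eval]
    by_cases h : x i
    · simp only [if_pos h, ih]
      congr 1
      funext j
      by_cases hj : j = i
      · subst hj; simp [Bool.not_eq_true] at h ⊢; simp [h]
      · simp [Function.update_of_ne hj, List.mem_cons, hj]
    · simp only [if_neg h, ih]
      congr 1
      funext j
      by_cases hj : j = i
      · subst hj; simp [h]
      · simp [Function.update_of_ne hj, List.mem_cons, hj]

lemma bigT_depth {n : ℕ} (L : List (Fin n)) (g : (Fin n → Bool) → Bool) :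
    (bigT L g).depth = L.length := by
  induction L generalizing g with
  | nil => simp [bigT, DTree.depth]
  | cons i L ih => simp [bigT, DTree.depth, ih]

lemma DT_mem {n : ℕ} (g : (Fin n → Bool) → Bool) :
    ∃ t : DTree n, (∀ x, t.eval x = g x) ∧ t.depth ≤ DT g := by
  have hne : (DT g) ∈ {d | ∃ t : DTree n, (∀ x, t.eval x = g x) ∧ t.depth ≤ d} := by
    apply Nat.sInf_mem
    refine ⟨n, bigT (List.finRange n) g, fun x => ?_, by rw [bigT_depth]; simp⟩
    rw [bigT_eval]
    congr 1
    funext j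
    simp [List.mem_finRange]
  exact hne

lemma DT_restrict_le {n : ℕ} (f : (Fin n → Bool) → Bool) (S : Finset (Fin n))
    (xbar : Fin n → Bool) : DT (restrict f S xbar) ≤ S.card := by
  apply Nat.sInf_le
  refine ⟨bigT S.toList (restrict f S xbar), fun x => ?_, by rw [bigT_depth]; simp⟩
  rw [bigT_eval]
  simp only [_root_.restrict]
  congr 1
  funext j
  by_cases hj : j ∈ S <;> simp [hj, Finset.mem_toList]

lemma tree_sum_zero {n : ℕ} (t : DTree n) : ∀ (S : Finset (Fin n)), t.depth < S.card →
    ∑ x : Fin n → Bool, bToR (t.eval x) * chi S x = 0 := by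
  induction t with
  | leaf b =>
    intro S hS
    have hne : S.Nonempty := Finset.card_pos.mp (by simpa [DTree.depth] using hS)
    simp only [DTree.eval]
    rw [← Finset.mul_sum, sum_chi_zero S hne, mul_zero]
  | node i t₁ t₀ ih₁ ih₀ =>
    intro S hS
    have hd : max t₁.depth t₀.depth + 1 < S.card := hS
    set S' := if i ∈ S then S.erase i else insert i S with hS'
    have hcard : S.card - 1 ≤ S'.card := by
      by_cases h : i ∈ S
      · simp [hS', h, Finset.card_erase_of_mem h]
      · simp only [hS', h, if_false]
        rw [Finset.card_insert_of_notMem h]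
        omega
    have h1S : t₁.depth < S.card := by omega
    have h0S : t₀.depth < S.card := by omega
    have h1S' : t₁.depth < S'.card := by omega
    have h0S' : t₀.depth < S'.card := by omega
    have key : ∀ x : Fin n → Bool,
        bToR ((DTree.node i t₁ t₀).eval x) * chi S x
          = ((bToR (t₁.eval x) * chi S x + bToR (t₀.eval x) * chi S x)
            + (-(bToR (t₁.eval x) * chi S' x) + bToR (t₀.eval x) * chi S' x)) / 2 := by
      intro x
      have hchi : chi S' x = (if x i then (-1:ℝ) else 1) * chi S x := (chi_mul S i x).symm
      simp only [DTree.eval]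
      by_cases hx : x i
      · simp only [if_pos hx] at hchi ⊢
        rw [hchi]; ring
      · simp only [if_neg hx] at hchi ⊢
        rw [hchi]; ring
    calc ∑ x : Fin n → Bool, bToR ((DTree.node i t₁ t₀).eval x) * chi S x
        = ∑ x : Fin n → Bool,
            ((bToR (t₁.eval x) * chi S x + bToR (t₀.eval x) * chi S x)
            + (-(bToR (t₁.eval x) * chi S' x) + bToR (t₀.eval x) * chi S' x)) / 2 :=
          Finset.sum_congr rfl fun x _ => key x
      _ = ((∑ x : Fin n → Bool, bToR (t₁.eval x) * chi S x)
            + (∑ x : Fin n → Bool, bToR (t₀.eval x) * chi S x)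
            + (-(∑ x : Fin n → Bool, bToR (t₁.eval x) * chi S' x)
            + (∑ x : Fin n → Bool, bToR (t₀.eval x) * chi S' x))) / 2 := by
          rw [← Finset.sum_div]
          congr 1
          rw [Finset.sum_add_distrib, Finset.sum_add_distrib, Finset.sum_add_distrib,
            Finset.sum_neg_distrib]
      _ = 0 := by rw [ih₁ S h1S, ih₀ S h0S, ih₁ S' h1S', ih₀ S' h0S']; norm_num

def mrg {n : ℕ} (S : Finset (Fin n)) (x xbar : Fin n → Bool) : Fin n → Bool :=
  fun i => if i ∈ S then x i else xbar i

lemma mrg_invol {n : ℕ} (S : Finset (Fin n)) :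
    Function.Involutive (fun p : (Fin n → Bool) × (Fin n → Bool) =>
      (mrg S p.2 p.1, mrg S p.1 p.2)) := by
  intro p
  rw [Prod.ext_iff]
  constructor <;> (funext j; by_cases hj : j ∈ S <;> simp [mrg, hj])

lemma double_sum {n : ℕ} (F : (Fin n → Bool) → ℝ) (S : Finset (Fin n)) :
    ∑ xbar : Fin n → Bool, ∑ x : Fin n → Bool, F (mrg S x xbar) * chi S (mrg S x xbar)
      = 2 ^ n * ∑ y : Fin n → Bool, F y * chi S y := by
  have hb := (mrg_invol S).bijective
  have := Fintype.sum_bijective _ hb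
    (fun p : (Fin n → Bool) × (Fin n → Bool) => F (mrg S p.2 p.1) * chi S (mrg S p.2 p.1))
    (fun p : (Fin n → Bool) × (Fin n → Bool) => F p.1 * chi S p.1)
    (fun p => rfl)
  calc ∑ xbar : Fin n → Bool, ∑ x : Fin n → Bool, F (mrg S x xbar) * chi S (mrg S x xbar)
      = ∑ p : (Fin n → Bool) × (Fin n → Bool), F (mrg S p.2 p.1) * chi S (mrg S p.2 p.1) :=
        (Fintype.sum_prod_type (f := fun p : (Fin n → Bool) × (Fin n → Bool) =>
          F (mrg S p.2 p.1) * chi S (mrg S p.2 p.1))).symm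
    _ = ∑ p : (Fin n → Bool) × (Fin n → Bool), F p.1 * chi S p.1 := this
    _ = ∑ y : Fin n → Bool, ∑ _z : Fin n → Bool, F y * chi S y := by
        exact Fintype.sum_prod_type (f := fun p : (Fin n → Bool) × (Fin n → Bool) =>
          F p.1 * chi S p.1)
    _ = ∑ y : Fin n → Bool, (2 ^ n : ℝ) * (F y * chi S y) := by
        refine Finset.sum_congr rfl fun y _ => ?_
        rw [Finset.sum_const, Finset.card_univ]
        simp [Fintype.card_fun, nsmul_eq_mul]
    _ = 2 ^ n * ∑ y : Fin n → Bool, F y * chi S y := (Finset.mul_sum _ _ _).symm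

/-- `|f̂(S)|` is at most the probability over a uniform assignment of
the fixed variables that the restriction of `f` to `S` has full decision tree depth. -/
theorem stmt2 {n : ℕ} (f : (Fin n → Bool) → Bool) (S : Finset (Fin n)) :
    |fhat (fun x => bToR (f x)) S| ≤ pr (fun xbar => DT (restrict f S xbar) = S.card) := by
  classical
  set F : (Fin n → Bool) → ℝ := fun x => bToR (f x) with hF
  set A : (Fin n → Bool) → ℝ := fun xbar =>
    ∑ x : Fin n → Bool, bToR (restrict f S xbar x) * chi S x with hA
  have hN : (0:ℝ) < 2 ^ n := by positivity
  -- A in merge form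
  have hA_eq : ∀ xbar, A xbar = ∑ x : Fin n → Bool, F (mrg S x xbar) * chi S (mrg S x xbar) := by
    intro xbar
    refine Finset.sum_congr rfl fun x _ => ?_
    have h1 : restrict f S xbar x = f (mrg S x xbar) := rfl
    have h2 : chi S x = chi S (mrg S x xbar) :=
      chi_congr S fun i hi => by simp [mrg, hi]
    rw [h1, ← h2]
  have hsum : ∑ xbar : Fin n → Bool, A xbar
      = 2 ^ n * ∑ y : Fin n → Bool, F y * chi S y := by
    rw [Finset.sum_congr rfl fun xbar _ => hA_eq xbar]
    exact double_sum F S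
  have hfhat : fhat F S = (∑ xbar : Fin n → Bool, A xbar) / (2 ^ n * 2 ^ n) := by
    rw [hsum, fhat]
    field_simp
  -- bound on each A
  have hAbd : ∀ xbar : Fin n → Bool,
      |A xbar| ≤ if DT (restrict f S xbar) = S.card then (2:ℝ) ^ n else 0 := by
    intro xbar
    by_cases hdt : DT (restrict f S xbar) = S.card
    · rw [if_pos hdt]
      calc |A xbar| ≤ ∑ x : Fin n → Bool, |bToR (restrict f S xbar x) * chi S x| :=
            Finset.abs_sum_le_sum_abs _ _
        _ ≤ ∑ _x : Fin n → Bool, (1:ℝ) := by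
            refine Finset.sum_le_sum fun x _ => ?_
            rw [abs_mul]
            have hb : |bToR (restrict f S xbar x)| ≤ 1 := by
              unfold bToR
              by_cases h : restrict f S xbar x <;> simp [h]
            calc |bToR (restrict f S xbar x)| * |chi S x| ≤ 1 * 1 :=
              mul_le_mul hb (chi_abs_le S x) (abs_nonneg _) zero_le_one
            _ = 1 := by ring
        _ ≤ (2:ℝ) ^ n := by
            rw [Finset.sum_const, Finset.card_univ]
            simp [Fintype.card_fun]
    · rw [if_neg hdt]
      have hlt : DT (restrict f S xbar) < S.card :=
        lt_of_le_of_ne (DT_restrict_le f S xbar) hdt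
      obtain ⟨t, heval, hdepth⟩ := DT_mem (restrict f S xbar)
      have hz : A xbar = 0 := by
        show (∑ x : Fin n → Bool, bToR (restrict f S xbar x) * chi S x) = 0
        have : ∀ x, bToR (restrict f S xbar x) * chi S x = bToR (t.eval x) * chi S x := by
          intro x; rw [heval]
        rw [Finset.sum_congr rfl fun x _ => (this x)]
        exact tree_sum_zero t S (lt_of_le_of_lt hdepth hlt)
      rw [hz, abs_zero]
  -- assemble
  have habs : |∑ xbar : Fin n → Bool, A xbar|
      ≤ ((Finset.univ.filter fun xbar => DT (restrict f S xbar) = S.card).card : ℝ) * 2 ^ n := by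
    calc |∑ xbar : Fin n → Bool, A xbar| ≤ ∑ xbar : Fin n → Bool, |A xbar| :=
          Finset.abs_sum_le_sum_abs _ _
      _ ≤ ∑ xbar : Fin n → Bool,
            (if DT (restrict f S xbar) = S.card then (2:ℝ) ^ n else 0) :=
          Finset.sum_le_sum fun xbar _ => hAbd xbar
      _ = ∑ xbar ∈ Finset.univ.filter fun xbar => DT (restrict f S xbar) = S.card, (2:ℝ) ^ n :=
          (Finset.sum_filter _ _).symm
      _ = ((Finset.univ.filter fun xbar => DT (restrict f S xbar) = S.card).card : ℝ) * 2 ^ n := by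
          rw [Finset.sum_const]; simp [nsmul_eq_mul]
  have hpr : pr (fun xbar => DT (restrict f S xbar) = S.card)
      = ((Finset.univ.filter fun xbar => DT (restrict f S xbar) = S.card).card : ℝ) / 2 ^ n := by
    rw [pr, Finset.filter_congr_decidable]
  rw [hfhat, hpr, abs_div, abs_of_pos (by positivity : (0:ℝ) < 2 ^ n * 2 ^ n)]
  rw [div_le_div_iff₀ (by positivity) hN]
  calc |∑ xbar : Fin n → Bool, A xbar| * 2 ^ n
      ≤ (((Finset.univ.filter fun xbar => DT (restrict f S xbar) = S.card).card : ℝ) * 2 ^ n) * 2 ^ n :=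
        mul_le_mul_of_nonneg_right habs (le_of_lt hN)
    _ = ((Finset.univ.filter fun xbar => DT (restrict f S xbar) = S.card).card : ℝ) * (2 ^ n * 2 ^ n) := by
        ring
end

section
/- Let A₁, …, A_l be finite sets such that |A₁| + ⋯ + |A_l| ≤ v and 2^{-|A₁|} + ⋯ + 2^{-|A_l|} ≤ F, where v > F > 0. Then l ≤ 4v / log₂(v/F). -/
open Finset

lemma logb_le_two_mul_sqrt (x : ℝ) (hx : 1 ≤ x) :
    Real.logb 2 x ≤ 2 * Real.sqrt x := by
  have hx0 : 0 < x := lt_of_lt_of_le one_pos hx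
  set t := x ^ ((1:ℝ)/4) with ht
  have ht0 : 0 < t := Real.rpow_pos_of_pos hx0 _
  have hlogt : Real.log t = (1/4) * Real.log x := Real.log_rpow hx0 _
  have hlt : Real.log t ≤ t - 1 := Real.log_le_sub_one_of_pos ht0
  have hsqrt : Real.sqrt x = t ^ 2 := by
    rw [ht, ← Real.rpow_natCast (x ^ ((1:ℝ)/4)) 2, ← Real.rpow_mul hx0.le]
    norm_num [Real.sqrt_eq_rpow]
  have hlog2 : (0.6931471803 : ℝ) < Real.log 2 := Real.log_two_gt_d9
  rw [Real.logb, hsqrt, div_le_iff₀ (by linarith)]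
  nlinarith [sq_nonneg (t - 3/2), sq_nonneg t]

/-- If finite sets `A₁, …, A_l` satisfy `∑|A_r| ≤ v` and
`∑ 2^{-|A_r|} ≤ F` with `v > F > 0`, then `l ≤ 4v / log₂(v/F)`. -/
theorem stmt4 {α : Type*} (l : ℕ) (A : Fin l → Finset α) (v F : ℝ)
    (hF : 0 < F) (hvF : F < v)
    (h1 : ∑ r, ((A r).card : ℝ) ≤ v)
    (h2 : ∑ r, (2 : ℝ) ^ (-((A r).card : ℝ)) ≤ F) :
    (l : ℝ) ≤ 4 * v / Real.logb 2 (v / F) := by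
  set L := Real.logb 2 (v / F) with hLdef
  have hv : 0 < v := hF.trans hvF
  have hx1 : 1 < v / F := (one_lt_div hF).mpr hvF
  have hx0 : 0 < v / F := by positivity
  have hL : 0 < L := Real.logb_pos one_lt_two hx1
  have hLle : L ≤ 2 * Real.sqrt (v / F) := logb_le_two_mul_sqrt _ hx1.le
  set S := Finset.univ.filter (fun r : Fin l => L / 2 ≤ ((A r).card : ℝ)) with hS
  -- bound on S
  have hb1 : (S.card : ℝ) * (L / 2) ≤ v := by
    have h1' : S.card • (L / 2) ≤ ∑ r ∈ S, ((A r).card : ℝ) := by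
      apply Finset.card_nsmul_le_sum
      intro r hr
      exact (Finset.mem_filter.mp hr).2
    rw [nsmul_eq_mul] at h1'
    refine h1'.trans (le_trans ?_ h1)
    exact Finset.sum_le_sum_of_subset_of_nonneg (Finset.subset_univ _)
      (fun i _ _ => by positivity)
  -- bound on Sᶜ
  have hkey : (v / F) ^ (-(1/2) : ℝ) = (Real.sqrt (v / F))⁻¹ := by
    rw [Real.rpow_neg hx0.le, ← Real.sqrt_eq_rpow]
  have hb2 : (Sᶜ.card : ℝ) * (Real.sqrt (v / F))⁻¹ ≤ F := by
    have h2' : Sᶜ.card • ((v / F) ^ (-(1/2) : ℝ)) ≤ ∑ r ∈ Sᶜ, (2:ℝ) ^ (-((A r).card : ℝ)) := by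
      apply Finset.card_nsmul_le_sum
      intro r hr
      have hr' : ¬ (L / 2 ≤ ((A r).card : ℝ)) := by
        have := Finset.mem_compl.mp hr
        simpa [hS] using this
      push_neg at hr'
      have hvF2 : v / F = (2:ℝ) ^ L := (Real.rpow_logb two_pos (by norm_num) hx0).symm
      rw [hvF2, ← Real.rpow_mul (by norm_num : (0:ℝ) ≤ 2)]
      rw [Real.rpow_le_rpow_left_iff one_lt_two]
      nlinarith
    rw [nsmul_eq_mul, hkey] at h2'
    refine h2'.trans (le_trans ?_ h2)
    exact Finset.sum_le_sum_of_subset_of_nonneg (Finset.subset_univ _)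
      (fun i _ _ => by positivity)
  have hs0 : 0 < Real.sqrt (v / F) := Real.sqrt_pos.mpr hx0
  have hb2' : (Sᶜ.card : ℝ) ≤ F * Real.sqrt (v / F) := by
    calc (Sᶜ.card : ℝ) = Sᶜ.card * (Real.sqrt (v/F))⁻¹ * Real.sqrt (v/F) := by
          field_simp
      _ ≤ F * Real.sqrt (v/F) := by
          apply mul_le_mul_of_nonneg_right hb2 hs0.le
  have hsq : Real.sqrt (v / F) * Real.sqrt (v / F) = v / F := Real.mul_self_sqrt hx0.le
  have hcards : (S.card : ℝ) + (Sᶜ.card : ℝ) = l := by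
    have := Finset.card_add_card_compl S
    have h := congrArg (fun n : ℕ => (n : ℝ)) this
    push_cast at h
    simpa using h
  have hmain : (l : ℝ) * L ≤ 4 * v := by
    have e1 : (S.card : ℝ) * L ≤ 2 * v := by nlinarith
    have e2 : (Sᶜ.card : ℝ) * L ≤ 2 * v := by
      have : (Sᶜ.card : ℝ) * L ≤ (F * Real.sqrt (v/F)) * (2 * Real.sqrt (v/F)) := by
        apply mul_le_mul hb2' hLle hL.le (by positivity)
      have hfx : (F * Real.sqrt (v/F)) * (2 * Real.sqrt (v/F)) = 2 * v := by
        have : F * (v / F) = v := by field_simp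
        nlinarith
      linarith
    nlinarith
  rw [le_div_iff₀ hL]
  linarith
end

section
/- Let f = T₁ ∨ ⋯ ∨ T_s be a read-k DNF over {-1,1}^n where each term T_j queries |T_j| variables. Then ∑_{j=1}^s 2^{-|T_j|} ≤ k · ln(1/(1 − Pr_x[f(x) = 1])), where x is uniform on {-1,1}^n. -/
open Finset

/-- A DNF term on `n` variables: a set of variables together with the required
sign for each (a term is a conjunction of literals). -/
abbrev Term (n : ℕ) := Finset (Fin n) × (Fin n → Bool)

/-- A term is satisfied when all its literals hold. -/
def termSat {n : ℕ} (T : Term n) (x : Fin n → Bool) : Prop :=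
  ∀ i ∈ T.1, x i = T.2 i

/-- Evaluation of the DNF given by a family of terms. -/
def dnfEval {n s : ℕ} (terms : Fin s → Term n) (x : Fin n → Bool) : Prop :=
  ∃ j, termSat (terms j) x

/-- A family of terms is read-`k` if every variable occurs in at most `k` terms. -/
def ReadK {n s : ℕ} (terms : Fin s → Term n) (k : ℕ) : Prop :=
  ∀ i : Fin n, (Finset.univ.filter fun j => i ∈ (terms j).1).card ≤ k


namespace St10
open Finset
noncomputable section

/-- merge: use `y` on `u`, `x` off `u`. -/
def mrg {n : ℕ} (u : Finset (Fin n)) (y x : Fin n → Bool) : Fin n → Bool :=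
  fun i => if i ∈ u then y i else x i

def Eav {n : ℕ} (u : Finset (Fin n)) (f : (Fin n → Bool) → ℝ) (x : Fin n → Bool) : ℝ :=
  (∑ y : Fin n → Bool, f (mrg u y x)) / 2 ^ n

lemma Eav_empty {n : ℕ} (f : (Fin n → Bool) → ℝ) (x : Fin n → Bool) : Eav ∅ f x = f x := by
  have h : ∀ y, mrg ∅ y x = x := by intro y; funext j; simp [mrg]
  simp only [Eav, h, Finset.sum_const, Finset.card_univ, Fintype.card_fun,
    Fintype.card_bool, Fintype.card_fin, nsmul_eq_mul]
  field_simp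
  push_cast; ring

lemma Eav_nonneg {n : ℕ} {u : Finset (Fin n)} {f : (Fin n → Bool) → ℝ}
    (hf : ∀ z, 0 ≤ f z) (x : Fin n → Bool) : 0 ≤ Eav u f x := by
  apply div_nonneg (Finset.sum_nonneg fun _ _ => hf _) (by positivity)

lemma mrg_insert {n : ℕ} (u : Finset (Fin n)) (i : Fin n) (y x : Fin n → Bool) :
    mrg (insert i u) y x = Function.update (mrg u y x) i (y i) := by
  funext j
  rcases eq_or_ne j i with rfl | hj
  · simp [mrg, Function.update]
  · simp [mrg, Function.update, hj]

lemma mrg_flip {n : ℕ} {u : Finset (Fin n)} {i : Fin n} (hi : i ∉ u) (y x : Fin n → Bool) :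
    mrg u (Function.update y i (!(y i))) x = mrg u y x := by
  funext j
  rcases eq_or_ne j i with rfl | hj
  · simp [mrg, hi]
  · simp [mrg, Function.update, hj]

lemma Eav_insert {n : ℕ} {u : Finset (Fin n)} {i : Fin n} (hi : i ∉ u)
    (f : (Fin n → Bool) → ℝ) (x : Fin n → Bool) :
    Eav (insert i u) f x =
      (Eav u (fun z => f (Function.update z i false)) x
        + Eav u (fun z => f (Function.update z i true)) x) / 2 := by
  have key : 2 * ∑ y : Fin n → Bool, f (mrg (insert i u) y x)
      = (∑ y : Fin n → Bool, f (Function.update (mrg u y x) i false))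
        + (∑ y : Fin n → Bool, f (Function.update (mrg u y x) i true)) := by
    have flipinv : Function.Involutive (fun y : Fin n → Bool => Function.update y i (!(y i))) := by
      intro y
      funext j
      rcases eq_or_ne j i with rfl | hj
      · simp [Function.update]
      · simp [Function.update, hj]
    have hflip : ∑ y : Fin n → Bool, f (mrg (insert i u) y x)
        = ∑ y : Fin n → Bool, f (mrg (insert i u) (Function.update y i (!(y i))) x) :=
      (Fintype.sum_equiv flipinv.toPerm _ _ (fun y => rfl)).symm
    rw [two_mul]
    nth_rewrite 2 [hflip]
    rw [← Finset.sum_add_distrib, ← Finset.sum_add_distrib]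
    apply Finset.sum_congr rfl
    intro y _
    rw [mrg_insert, mrg_insert, mrg_flip hi]
    have hupd : (Function.update y i (!(y i))) i = !(y i) := by simp
    rw [hupd]
    cases h : y i
    · simp [h]
    · simp [h, add_comm]
  simp only [Eav]
  field_simp
  linear_combination key


/-- Two-point concavity of `x ↦ x^r` for `0 ≤ r ≤ 1`. -/
lemma two_point_rpow {r a b : ℝ} (hr0 : 0 ≤ r) (hr1 : r ≤ 1) (ha : 0 ≤ a) (hb : 0 ≤ b) :
    a ^ r + b ^ r ≤ 2 ^ (1 - r) * (a + b) ^ r := by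
  rcases eq_or_lt_of_le hr0 with hr | hr
  · simp [← hr]; norm_num
  rcases eq_or_lt_of_le (add_nonneg ha hb) with hm | hm
  · have ha0 : a = 0 := by linarith
    have hb0 : b = 0 := by linarith
    simp [ha0, hb0, Real.zero_rpow (ne_of_gt hr)]
  set m := a + b with hm_def
  have hu : 0 ≤ a / m := div_nonneg ha hm.le
  have hv : 0 ≤ b / m := div_nonneg hb hm.le
  have h1 : (a / m) ^ r * (1/2 : ℝ) ^ (1 - r) ≤ r * (a / m) + (1 - r) * (1/2) :=
    Real.geom_mean_le_arith_mean2_weighted hr0 (by linarith) hu (by norm_num) (by ring)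
  have h2 : (b / m) ^ r * (1/2 : ℝ) ^ (1 - r) ≤ r * (b / m) + (1 - r) * (1/2) :=
    Real.geom_mean_le_arith_mean2_weighted hr0 (by linarith) hv (by norm_num) (by ring)
  have habm : r * (a / m) + r * (b / m) = r := by field_simp; ring
  have hsum : ((a / m) ^ r + (b / m) ^ r) * (1/2 : ℝ) ^ (1 - r) ≤ 1 := by
    nlinarith [h1, h2]
  have hpow : ((1:ℝ)/2) ^ (1 - r) = ((2:ℝ) ^ (1 - r))⁻¹ := by
    rw [one_div, Real.inv_rpow (by norm_num)]
  have hc : (0:ℝ) < (2:ℝ) ^ (1 - r) := Real.rpow_pos_of_pos (by norm_num) _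
  have hX : (a / m) ^ r + (b / m) ^ r ≤ (2:ℝ) ^ (1 - r) := by
    rw [hpow] at hsum
    calc (a / m) ^ r + (b / m) ^ r
        = ((a / m) ^ r + (b / m) ^ r) * ((2:ℝ) ^ (1-r))⁻¹ * (2:ℝ) ^ (1-r) := by
          field_simp
      _ ≤ 1 * (2:ℝ) ^ (1-r) := mul_le_mul_of_nonneg_right hsum hc.le
      _ = (2:ℝ) ^ (1-r) := one_mul _
  have hae : a ^ r = (a / m) ^ r * m ^ r := by
    rw [← Real.mul_rpow hu hm.le, div_mul_cancel₀ _ (ne_of_gt hm)]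
  have hbe : b ^ r = (b / m) ^ r * m ^ r := by
    rw [← Real.mul_rpow hv hm.le, div_mul_cancel₀ _ (ne_of_gt hm)]
  have hmr : 0 ≤ m ^ r := Real.rpow_nonneg hm.le _
  calc a ^ r + b ^ r = ((a / m) ^ r + (b / m) ^ r) * m ^ r := by rw [hae, hbe]; ring
    _ ≤ (2:ℝ) ^ (1 - r) * m ^ r := mul_le_mul_of_nonneg_right hX hmr


/-- Superadditivity of the geometric mean (Mahler-type inequality). -/
lemma mahler {ι : Type*} {T : Finset ι} (hT : T.Nonempty) (a b : ι → ℝ)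
    (ha : ∀ j ∈ T, 0 ≤ a j) (hb : ∀ j ∈ T, 0 ≤ b j) :
    (∏ j ∈ T, a j) ^ ((T.card : ℝ)⁻¹) + (∏ j ∈ T, b j) ^ ((T.card : ℝ)⁻¹)
      ≤ (∏ j ∈ T, (a j + b j)) ^ ((T.card : ℝ)⁻¹) := by
  set t : ℝ := (T.card : ℝ) with ht_def
  have htpos : (0:ℝ) < t := by
    rw [ht_def]
    exact_mod_cast Finset.card_pos.mpr hT
  have hw : ∀ j ∈ T, (0:ℝ) ≤ t⁻¹ := fun _ _ => inv_nonneg.mpr htpos.le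
  have hw' : ∑ _j ∈ T, t⁻¹ = 1 := by
    rw [Finset.sum_const, nsmul_eq_mul]
    field_simp
    exact ht_def.symm
  by_cases hz : ∃ j ∈ T, a j + b j = 0
  · obtain ⟨j, hj, hab⟩ := hz
    have haj : a j = 0 := le_antisymm (by linarith [hb j hj]) (ha j hj)
    have hbj : b j = 0 := le_antisymm (by linarith [ha j hj]) (hb j hj)
    have hA : (∏ j ∈ T, a j) = 0 := Finset.prod_eq_zero hj haj
    have hB : (∏ j ∈ T, b j) = 0 := Finset.prod_eq_zero hj hbj
    rw [hA, hB, Real.zero_rpow (by positivity)]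
    simp only [add_zero]
    exact Real.rpow_nonneg (Finset.prod_nonneg fun j hj => add_nonneg (ha j hj) (hb j hj)) _
  push_neg at hz
  have hcpos : ∀ j ∈ T, 0 < a j + b j := fun j hj =>
    lt_of_le_of_ne (add_nonneg (ha j hj) (hb j hj)) (Ne.symm (hz j hj))
  have hCpos : 0 < ∏ j ∈ T, (a j + b j) := Finset.prod_pos hcpos
  have key : ∀ (c : ι → ℝ), (∀ j ∈ T, 0 ≤ c j) →
      (∏ j ∈ T, c j) ^ t⁻¹ ≤ (∑ j ∈ T, t⁻¹ * (c j / (a j + b j))) * (∏ j ∈ T, (a j + b j)) ^ t⁻¹ := by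
    intro c hc
    have h1 : ∏ j ∈ T, (c j / (a j + b j)) ^ t⁻¹ ≤ ∑ j ∈ T, t⁻¹ * (c j / (a j + b j)) :=
      Real.geom_mean_le_arith_mean_weighted T (fun _ => t⁻¹) (fun j => c j / (a j + b j))
        hw hw' (fun j hj => div_nonneg (hc j hj) (hcpos j hj).le)
    have h2 : ∏ j ∈ T, (c j / (a j + b j)) ^ t⁻¹
        = (∏ j ∈ T, c j) ^ t⁻¹ / (∏ j ∈ T, (a j + b j)) ^ t⁻¹ := by
      rw [Real.finset_prod_rpow T _ (fun j hj => div_nonneg (hc j hj) (hcpos j hj).le),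
        Finset.prod_div_distrib, Real.div_rpow (Finset.prod_nonneg hc) hCpos.le]
    rw [h2] at h1
    have hCr : (0:ℝ) < (∏ j ∈ T, (a j + b j)) ^ t⁻¹ := Real.rpow_pos_of_pos hCpos _
    calc (∏ j ∈ T, c j) ^ t⁻¹
        = ((∏ j ∈ T, c j) ^ t⁻¹ / (∏ j ∈ T, (a j + b j)) ^ t⁻¹) * (∏ j ∈ T, (a j + b j)) ^ t⁻¹ := by
          field_simp
      _ ≤ _ := mul_le_mul_of_nonneg_right h1 hCr.le
  have hA := key a ha
  have hB := key b hb
  have hs : (∑ j ∈ T, t⁻¹ * (a j / (a j + b j))) + (∑ j ∈ T, t⁻¹ * (b j / (a j + b j))) = 1 := by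
    rw [← Finset.sum_add_distrib]
    calc ∑ j ∈ T, (t⁻¹ * (a j / (a j + b j)) + t⁻¹ * (b j / (a j + b j)))
        = ∑ j ∈ T, t⁻¹ := by
          apply Finset.sum_congr rfl
          intro j hj
          have := (hcpos j hj).ne'
          field_simp
      _ = 1 := hw'
  nlinarith [hA, hB, Real.rpow_pos_of_pos hCpos t⁻¹]

/-- The key two-point Hölder inequality with at most `k` factors. -/
lemma hoelder_half {ι : Type*} {T : Finset ι} {k : ℕ} (hk : 0 < k) (hcard : T.card ≤ k)
    (a b : ι → ℝ) (ha : ∀ j ∈ T, 0 ≤ a j) (hb : ∀ j ∈ T, 0 ≤ b j) :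
    ((∏ j ∈ T, a j ^ ((k:ℝ)⁻¹)) + (∏ j ∈ T, b j ^ ((k:ℝ)⁻¹))) / 2
      ≤ ∏ j ∈ T, ((a j + b j) / 2) ^ ((k:ℝ)⁻¹) := by
  rcases T.eq_empty_or_nonempty with rfl | hT
  · simp
  set w : ℝ := (k:ℝ)⁻¹ with hw_def
  have hwpos : 0 < w := by positivity
  set t : ℝ := (T.card : ℝ) with ht_def
  have htpos : (0:ℝ) < t := by rw [ht_def]; exact_mod_cast Finset.card_pos.mpr hT
  set r : ℝ := t * w with hr_def
  have hr0 : 0 < r := mul_pos htpos hwpos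
  have hr1 : r ≤ 1 := by
    have htk : t ≤ (k:ℝ) := by rw [ht_def]; exact_mod_cast hcard
    have hkpos : (0:ℝ) < (k:ℝ) := by exact_mod_cast hk
    calc r = t * (k:ℝ)⁻¹ := by rw [hr_def, hw_def]
      _ ≤ (k:ℝ) * (k:ℝ)⁻¹ := mul_le_mul_of_nonneg_right htk (by positivity)
      _ = 1 := mul_inv_cancel₀ hkpos.ne'
  set A := ∏ j ∈ T, a j with hA_def
  set B := ∏ j ∈ T, b j with hB_def
  set C := ∏ j ∈ T, (a j + b j) with hC_def
  have hAnn : 0 ≤ A := Finset.prod_nonneg ha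
  have hBnn : 0 ≤ B := Finset.prod_nonneg hb
  have hCnn : 0 ≤ C := Finset.prod_nonneg fun j hj => add_nonneg (ha j hj) (hb j hj)
  have hxw : ∀ (X : ℝ), 0 ≤ X → X ^ w = (X ^ t⁻¹) ^ r := by
    intro X hX
    rw [← Real.rpow_mul hX, hr_def, ← mul_assoc, inv_mul_cancel₀ htpos.ne', one_mul]
  have hmah := mahler hT a b ha hb
  have h1 : (∏ j ∈ T, a j ^ w) = A ^ w := Real.finset_prod_rpow T _ ha _
  have h2 : (∏ j ∈ T, b j ^ w) = B ^ w := Real.finset_prod_rpow T _ hb _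
  have h3 : (∏ j ∈ T, ((a j + b j)/2) ^ w) = (C / 2 ^ t) ^ w := by
    rw [Real.finset_prod_rpow T _ (fun j hj => div_nonneg (add_nonneg (ha j hj) (hb j hj)) (by norm_num)) _]
    congr 1
    rw [Finset.prod_div_distrib, Finset.prod_const]
    congr 1
    rw [ht_def, Real.rpow_natCast]
  rw [h1, h2, h3]
  have hx : 0 ≤ A ^ t⁻¹ := Real.rpow_nonneg hAnn _
  have hy : 0 ≤ B ^ t⁻¹ := Real.rpow_nonneg hBnn _
  have step1 : A ^ w + B ^ w ≤ 2 ^ (1 - r) * (A ^ t⁻¹ + B ^ t⁻¹) ^ r := by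
    rw [hxw A hAnn, hxw B hBnn]
    exact two_point_rpow hr0.le hr1 hx hy
  have step2 : (A ^ t⁻¹ + B ^ t⁻¹) ^ r ≤ (C ^ t⁻¹) ^ r :=
    Real.rpow_le_rpow (add_nonneg hx hy) hmah hr0.le
  have step3 : (C ^ t⁻¹) ^ r = C ^ w := (hxw C hCnn).symm
  have hgoal : (C / 2 ^ t) ^ w = C ^ w / 2 ^ r := by
    rw [Real.div_rpow hCnn (by positivity), ← Real.rpow_mul (by norm_num : (0:ℝ) ≤ 2)]
  rw [hgoal]
  have h2r : (2:ℝ) ^ (1 - r) = 2 / 2 ^ r := by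
    rw [Real.rpow_sub (by norm_num), Real.rpow_one]
  calc (A ^ w + B ^ w) / 2 ≤ (2 ^ (1 - r) * (C ^ t⁻¹) ^ r) / 2 := by
        apply div_le_div_of_nonneg_right _ (by norm_num)
        exact step1.trans (mul_le_mul_of_nonneg_left step2 (by positivity))
    _ = C ^ w / 2 ^ r := by
        rw [step3, h2r]
        field_simp
  

def DepOn {n : ℕ} (S : Finset (Fin n)) (f : (Fin n → Bool) → ℝ) : Prop :=
  ∀ z z', (∀ i ∈ S, z i = z' i) → f z = f z'

lemma DepOn.update_eq {n : ℕ} {S : Finset (Fin n)} {f : (Fin n → Bool) → ℝ}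
    (h : DepOn S f) {i : Fin n} (hi : i ∉ S) (b : Bool) (z : Fin n → Bool) :
    f (Function.update z i b) = f z := by
  apply h
  intro j hj
  have : j ≠ i := fun e => hi (e ▸ hj)
  rw [Function.update_of_ne this]

lemma DepOn.comp_update {n : ℕ} {S : Finset (Fin n)} {f : (Fin n → Bool) → ℝ}
    (h : DepOn S f) (i : Fin n) (b : Bool) :
    DepOn S (fun z => f (Function.update z i b)) := by
  intro z z' hzz
  apply h
  intro j hj
  rcases eq_or_ne j i with rfl | hj'
  · simp
  · rw [Function.update_of_ne hj', Function.update_of_ne hj']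
    exact hzz j hj

lemma shearer_aux {n s k : ℕ} (hk : 0 < k) (S : Fin s → Finset (Fin n))
    (hread : ∀ i : Fin n, (univ.filter fun j => i ∈ S j).card ≤ k)
    (u : Finset (Fin n)) :
    ∀ (f : Fin s → (Fin n → Bool) → ℝ), (∀ j z, 0 ≤ f j z) → (∀ j, DepOn (S j) (f j)) →
    ∀ x, Eav u (fun z => ∏ j, (f j z) ^ ((k:ℝ)⁻¹)) x ≤ ∏ j, (Eav u (f j) x) ^ ((k:ℝ)⁻¹) := by
  induction u using Finset.induction_on with
  | empty =>
    intro f hnn hdep x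
    rw [Eav_empty]
    apply le_of_eq
    apply Finset.prod_congr rfl
    intro j _
    rw [Eav_empty]
  | @insert i u hiu ih =>
    intro f hnn hdep x
    set w : ℝ := ((k:ℝ)⁻¹) with hw_def
    set a : Fin s → ℝ := fun j => Eav u (fun z => f j (Function.update z i false)) x with ha_def
    set b : Fin s → ℝ := fun j => Eav u (fun z => f j (Function.update z i true)) x with hb_def
    have hann : ∀ j, 0 ≤ a j := fun j => Eav_nonneg (fun z => hnn j _) x
    have hbnn : ∀ j, 0 ≤ b j := fun j => Eav_nonneg (fun z => hnn j _) x
    -- recursion for each f j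
    have hfj : ∀ j, Eav (insert i u) (f j) x = (a j + b j) / 2 := fun j => Eav_insert hiu (f j) x
    -- recursion for the product
    have hrec := Eav_insert hiu (fun z => ∏ j, (f j z) ^ w) x
    have hIH0 : Eav u (fun z => ∏ j, (f j (Function.update z i false)) ^ w) x
        ≤ ∏ j, (a j) ^ w :=
      ih (fun j z => f j (Function.update z i false)) (fun j z => hnn j _)
        (fun j => (hdep j).comp_update i false) x
    have hIH1 : Eav u (fun z => ∏ j, (f j (Function.update z i true)) ^ w) x
        ≤ ∏ j, (b j) ^ w :=
      ih (fun j z => f j (Function.update z i true)) (fun j z => hnn j _)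
        (fun j => (hdep j).comp_update i true) x
    have step1 : Eav (insert i u) (fun z => ∏ j, (f j z) ^ w) x
        ≤ ((∏ j, (a j) ^ w) + (∏ j, (b j) ^ w)) / 2 := by
      rw [hrec]
      have := add_le_add hIH0 hIH1
      linarith [this]
    -- split the products over T := {j | i ∈ S j}
    classical
    set T : Finset (Fin s) := univ.filter (fun j => i ∈ S j) with hT_def
    have hsplit : ∀ (c : Fin s → ℝ), (∏ j, c j) = (∏ j ∈ T, c j) * ∏ j ∈ univ.filter (fun j => ¬ i ∈ S j), c j := by
      intro c
      rw [hT_def, Finset.prod_filter_mul_prod_filter_not]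
    have habeq : ∀ j, i ∉ S j → a j = b j := by
      intro j hij
      rw [ha_def, hb_def]
      simp only
      congr 1
      funext z
      rw [(hdep j).update_eq hij, (hdep j).update_eq hij]
    have hcard : T.card ≤ k := hread i
    have hhold := hoelder_half hk hcard a b (fun j _ => hann j) (fun j _ => hbnn j)
    set D : ℝ := ∏ j ∈ univ.filter (fun j => ¬ i ∈ S j), ((a j + b j)/2) ^ w with hD_def
    have hDnn : 0 ≤ D := Finset.prod_nonneg fun j _ =>
      Real.rpow_nonneg (div_nonneg (add_nonneg (hann j) (hbnn j)) (by norm_num)) _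
    have hDa : (∏ j ∈ univ.filter (fun j => ¬ i ∈ S j), (a j) ^ w) = D := by
      apply Finset.prod_congr rfl
      intro j hj
      rw [Finset.mem_filter] at hj
      rw [habeq j hj.2]
      congr 1
      ring
    have hDb : (∏ j ∈ univ.filter (fun j => ¬ i ∈ S j), (b j) ^ w) = D := by
      apply Finset.prod_congr rfl
      intro j hj
      rw [Finset.mem_filter] at hj
      rw [← habeq j hj.2]
      congr 1
      ring
    have step2 : ((∏ j, (a j) ^ w) + (∏ j, (b j) ^ w)) / 2
        ≤ ∏ j, ((a j + b j)/2) ^ w := by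
      rw [hsplit (fun j => (a j) ^ w), hsplit (fun j => (b j) ^ w),
        hsplit (fun j => ((a j + b j)/2) ^ w), hDa, hDb]
      have : ((∏ j ∈ T, (a j) ^ w) * D + (∏ j ∈ T, (b j) ^ w) * D) / 2
          = (((∏ j ∈ T, (a j) ^ w) + (∏ j ∈ T, (b j) ^ w)) / 2) * D := by ring
      rw [this]
      exact mul_le_mul_of_nonneg_right hhold hDnn
    calc Eav (insert i u) (fun z => ∏ j, (f j z) ^ w) x
        ≤ ((∏ j, (a j) ^ w) + (∏ j, (b j) ^ w)) / 2 := step1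
      _ ≤ ∏ j, ((a j + b j)/2) ^ w := step2
      _ = ∏ j, (Eav (insert i u) (f j) x) ^ w := by
          apply Finset.prod_congr rfl
          intro j _
          rw [hfj j]


lemma pr_def {n : ℕ} (P : (Fin n → Bool) → Prop) [DecidablePred P] :
    pr P = ((Finset.univ.filter P).card : ℝ) / 2 ^ n := by
  unfold pr
  rw [Finset.filter_congr_decidable]

lemma pr_nonneg {n : ℕ} (P : (Fin n → Bool) → Prop) : 0 ≤ pr P := by
  unfold pr; positivity

lemma pr_compl {n : ℕ} (P : (Fin n → Bool) → Prop) :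
    pr (fun x => ¬ P x) = 1 - pr P := by
  classical
  rw [pr_def, pr_def]
  have h := Finset.card_filter_add_card_filter_not (s := (univ : Finset (Fin n → Bool)))
    (p := P)
  have hcard : (Finset.univ : Finset (Fin n → Bool)).card = 2 ^ n := by
    rw [Finset.card_univ, Fintype.card_fun]
    simp
  rw [hcard] at h
  have h2 : ((univ.filter (fun x => ¬ P x)).card : ℝ)
      = (2:ℝ) ^ n - (univ.filter P).card := by
    have := congrArg (fun m : ℕ => (m : ℝ)) h
    push_cast at this ⊢
    linarith
  rw [h2]
  field_simp

lemma card_agree {n : ℕ} (S : Finset (Fin n)) (σ : Fin n → Bool) :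
    ((univ.filter fun x : Fin n → Bool => ∀ i ∈ S, x i = σ i).card : ℕ)
      = 2 ^ (n - S.card) := by
  classical
  have e : {x : Fin n → Bool // ∀ i ∈ S, x i = σ i} ≃ ((Sᶜ : Finset (Fin n)) → Bool) :=
    { toFun := fun x j => x.1 j.1
      invFun := fun g => ⟨fun i => if h : i ∈ S then σ i else g ⟨i, by simpa using h⟩,
        fun i hi => by simp [hi]⟩
      left_inv := by
        intro x
        ext i
        by_cases h : i ∈ S
        · simp [h, x.2 i h]
        · simp [h]
      right_inv := by
        intro g
        funext j
        have hj : ¬ (j.1 ∈ S) := Finset.mem_compl.mp j.2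
        simp [hj] }
  have h1 : (univ.filter fun x : Fin n → Bool => ∀ i ∈ S, x i = σ i).card
      = Fintype.card {x : Fin n → Bool // ∀ i ∈ S, x i = σ i} :=
    (Fintype.card_subtype _).symm
  rw [h1, Fintype.card_congr e, Fintype.card_fun]
  have : Fintype.card ((Sᶜ : Finset (Fin n)) : Type) = n - S.card := by
    rw [Fintype.card_coe, Finset.card_compl]
    simp
  simp [this]

lemma pr_termSat {n : ℕ} (S : Finset (Fin n)) (σ : Fin n → Bool) :
    pr (fun x => ∀ i ∈ S, x i = σ i) = (2:ℝ) ^ (-(S.card : ℝ)) := by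
  classical
  rw [pr_def, card_agree]
  have hle : S.card ≤ n := by
    simpa using Finset.card_le_card (Finset.subset_univ S)
  push_cast
  rw [Real.rpow_neg (by norm_num : (0:ℝ) ≤ 2), Real.rpow_natCast]
  rw [div_eq_iff (by positivity : ((2:ℝ) ^ n) ≠ 0), inv_mul_eq_div,
    eq_div_iff (by positivity : ((2:ℝ) ^ (S.card)) ≠ 0), ← pow_add]
  congr 1
  omega


lemma mrg_univ {n : ℕ} (y x : Fin n → Bool) : mrg univ y x = y := by
  funext i; simp [mrg]

lemma Eav_univ {n : ℕ} (f : (Fin n → Bool) → ℝ) (x : Fin n → Bool) :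
    Eav univ f x = (∑ y : Fin n → Bool, f y) / 2 ^ n := by
  simp only [Eav, mrg_univ]

lemma sum_ind {n : ℕ} (P : (Fin n → Bool) → Prop) [DecidablePred P] :
    ∑ y : Fin n → Bool, (if P y then (0:ℝ) else 1)
      = ((univ.filter fun y => ¬ P y).card : ℝ) := by
  rw [Finset.sum_ite, Finset.sum_const_zero, zero_add, Finset.sum_const, nsmul_eq_mul, mul_one]

end
end St10

/-- For a read-`k` DNF with `Pr[f = 1] < 1`,
`∑_j 2^{-|T_j|} ≤ k · ln(1/(1 − Pr[f = 1]))`. -/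
theorem stmt10 {n s : ℕ} (terms : Fin s → Term n) (k : ℕ) (hread : ReadK terms k)
    (hbias : pr (dnfEval terms) < 1) :
    ∑ j : Fin s, (2 : ℝ) ^ (-((terms j).1.card : ℝ))
      ≤ k * Real.log (1 / (1 - pr (dnfEval terms))) := by
  classical
  have hp0 : 0 ≤ pr (dnfEval terms) := St10.pr_nonneg _
  have hq0 : 0 < 1 - pr (dnfEval terms) := by linarith
  rcases Nat.eq_zero_or_pos s with rfl | hs
  · rw [show (∑ j : Fin 0, (2 : ℝ) ^ (-((terms j).1.card : ℝ))) = 0 from rfl]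
    apply mul_nonneg (by positivity)
    apply Real.log_nonneg
    rw [le_div_iff₀ hq0]
    linarith
  rcases Nat.eq_zero_or_pos k with rfl | hk
  · exfalso
    have hSempty : ∀ j, (terms j).1 = ∅ := by
      intro j
      by_contra h
      obtain ⟨i, hi⟩ := Finset.nonempty_iff_ne_empty.mpr h
      have h0 := hread i
      rw [Nat.le_zero, Finset.card_eq_zero] at h0
      have : j ∈ (univ.filter fun j => i ∈ (terms j).1) := by
        simp [hi]
      rw [h0] at this
      exact absurd this (Finset.notMem_empty j)
    have hall : ∀ x, dnfEval terms x := by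
      intro x
      refine ⟨⟨0, hs⟩, fun i hi => ?_⟩
      rw [hSempty] at hi
      exact absurd hi (Finset.notMem_empty i)
    have : pr (dnfEval terms) = 1 := by
      rw [St10.pr_def, Finset.filter_true_of_mem (fun x _ => hall x), Finset.card_univ,
        Fintype.card_fun]
      simp
    rw [this] at hbias
    exact lt_irrefl 1 hbias
  -- main case
  set w : ℝ := ((k:ℝ)⁻¹) with hw_def
  have hwpos : 0 < w := by positivity
  set g : Fin s → (Fin n → Bool) → ℝ :=
    fun j z => if termSat (terms j) z then (0:ℝ) else 1 with hg_def
  have hgnn : ∀ j z, 0 ≤ g j z := by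
    intro j z
    rw [hg_def]
    dsimp only
    split <;> norm_num
  have hgdep : ∀ j, St10.DepOn (terms j).1 (g j) := by
    intro j z z' hzz
    have hiff : termSat (terms j) z ↔ termSat (terms j) z' := by
      constructor <;> intro h i hi
      · rw [← hzz i hi]; exact h i hi
      · rw [hzz i hi]; exact h i hi
    rw [hg_def]
    dsimp only
    by_cases h : termSat (terms j) z
    · rw [if_pos h, if_pos (hiff.mp h)]
    · rw [if_neg h, if_neg (fun h' => h (hiff.mpr h'))]
  set x0 : Fin n → Bool := fun _ => false with hx0_def
  have hshearer := St10.shearer_aux hk (fun j => (terms j).1) hread univ g hgnn hgdep x0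
  -- identify the left side
  have hLHS : St10.Eav univ (fun z => ∏ j, (g j z) ^ w) x0 = 1 - pr (dnfEval terms) := by
    have hprod : ∀ z, (∏ j, (g j z) ^ w) = (if dnfEval terms z then (0:ℝ) else 1) := by
      intro z
      by_cases h : dnfEval terms z
      · obtain ⟨j0, hj0⟩ := h
        rw [if_pos ⟨j0, hj0⟩]
        apply Finset.prod_eq_zero (Finset.mem_univ j0)
        rw [hg_def]
        dsimp only
        rw [if_pos hj0, Real.zero_rpow (ne_of_gt hwpos)]
      · rw [if_neg h]
        apply Finset.prod_eq_one
        intro j _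
        have : ¬ termSat (terms j) z := fun h' => h ⟨j, h'⟩
        rw [hg_def]
        dsimp only
        rw [if_neg this, Real.one_rpow]
    rw [St10.Eav_univ]
    calc (∑ y : Fin n → Bool, ∏ j, (g j y) ^ w) / 2 ^ n
        = (∑ y : Fin n → Bool, (if dnfEval terms y then (0:ℝ) else 1)) / 2 ^ n := by
          congr 1
          exact Finset.sum_congr rfl fun y _ => hprod y
      _ = ((univ.filter fun y => ¬ dnfEval terms y).card : ℝ) / 2 ^ n := by
          rw [St10.sum_ind]
      _ = pr (fun y => ¬ dnfEval terms y) := (St10.pr_def _).symm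
      _ = 1 - pr (dnfEval terms) := St10.pr_compl _
  -- identify each factor on the right side
  have hRHS : ∀ j, St10.Eav univ (g j) x0 = 1 - (2:ℝ) ^ (-(((terms j).1.card : ℕ) : ℝ)) := by
    intro j
    rw [St10.Eav_univ]
    calc (∑ y : Fin n → Bool, g j y) / 2 ^ n
        = ((univ.filter fun y => ¬ termSat (terms j) y).card : ℝ) / 2 ^ n := by
          rw [← St10.sum_ind (termSat (terms j))]
      _ = pr (fun y => ¬ termSat (terms j) y) := (St10.pr_def _).symm
      _ = 1 - pr (termSat (terms j)) := St10.pr_compl _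
      _ = 1 - (2:ℝ) ^ (-(((terms j).1.card : ℕ) : ℝ)) := by
          rw [show pr (termSat (terms j)) = pr (fun x => ∀ i ∈ (terms j).1, x i = (terms j).2 i)
            from rfl, St10.pr_termSat]
  set r : Fin s → ℝ := fun j => 1 - (2:ℝ) ^ (-(((terms j).1.card : ℕ) : ℝ)) with hr_def
  have hkey : 1 - pr (dnfEval terms) ≤ ∏ j, (r j) ^ w := by
    rw [← hLHS]
    refine hshearer.trans (le_of_eq ?_)
    exact Finset.prod_congr rfl fun j _ => by rw [hRHS j]
  have hrnn : ∀ j, 0 ≤ r j := by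
    intro j
    have h2 : (0:ℝ) ≤ St10.Eav univ (g j) x0 := St10.Eav_nonneg (fun z => hgnn j z) x0
    rw [hRHS j] at h2
    exact h2
  have hprodpos : 0 < ∏ j, (r j) ^ w := lt_of_lt_of_le hq0 hkey
  have hrpos : ∀ j, 0 < r j := by
    intro j
    rcases eq_or_lt_of_le (hrnn j) with h | h
    · exfalso
      have : (∏ j, (r j) ^ w) = 0 := by
        apply Finset.prod_eq_zero (Finset.mem_univ j)
        rw [← h, Real.zero_rpow (ne_of_gt hwpos)]
      rw [this] at hprodpos
      exact lt_irrefl 0 hprodpos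
    · exact h
  have hfacne : ∀ j ∈ (univ : Finset (Fin s)), (r j) ^ w ≠ 0 :=
    fun j _ => (Real.rpow_pos_of_pos (hrpos j) w).ne'
  have hlog1 : Real.log (1 - pr (dnfEval terms)) ≤ Real.log (∏ j, (r j) ^ w) :=
    Real.log_le_log hq0 hkey
  have hlog2 : Real.log (∏ j, (r j) ^ w) = ∑ j, w * Real.log (r j) := by
    rw [Real.log_prod hfacne]
    exact Finset.sum_congr rfl fun j _ => Real.log_rpow (hrpos j) w
  have hlog3 : ∀ j, Real.log (r j) ≤ -(2:ℝ) ^ (-(((terms j).1.card : ℕ) : ℝ)) := by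
    intro j
    have := Real.log_le_sub_one_of_pos (hrpos j)
    rw [hr_def] at this ⊢
    dsimp only at this ⊢
    linarith
  have hsum : ∑ j, w * Real.log (r j)
      ≤ w * (-(∑ j : Fin s, (2:ℝ) ^ (-(((terms j).1.card : ℕ) : ℝ)))) := by
    rw [← Finset.mul_sum]
    apply mul_le_mul_of_nonneg_left _ hwpos.le
    rw [← Finset.sum_neg_distrib]
    exact Finset.sum_le_sum fun j _ => hlog3 j
  set Y : ℝ := ∑ j : Fin s, (2:ℝ) ^ (-(((terms j).1.card : ℕ) : ℝ)) with hY_def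
  have hfinal : Real.log (1 - pr (dnfEval terms)) ≤ w * (-Y) := by
    calc Real.log (1 - pr (dnfEval terms)) ≤ Real.log (∏ j, (r j) ^ w) := hlog1
      _ = ∑ j, w * Real.log (r j) := hlog2
      _ ≤ w * (-Y) := hsum
  have hkw : (k:ℝ) * w = 1 := by
    rw [hw_def]
    field_simp
  have hYle : Y ≤ (k:ℝ) * Real.log (1 / (1 - pr (dnfEval terms))) := by
    rw [one_div, Real.log_inv]
    have h2 : (k:ℝ) * Real.log (1 - pr (dnfEval terms)) ≤ (k:ℝ) * (w * (-Y)) :=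
      mul_le_mul_of_nonneg_left hfinal (by positivity)
    rw [← mul_assoc, hkw, one_mul] at h2
    linarith
  calc ∑ j : Fin s, (2 : ℝ) ^ (-(((terms j).1.card : ℕ) : ℝ))
      ≤ (k:ℝ) * Real.log (1 / (1 - pr (dnfEval terms))) := hYle
end

section
/- Let f : {-1,1}^n → {0,1} and suppose S ⊆ [n] is such that the restriction f_{S|x_{S̄}} has decision tree depth |S| for some assignment x_{S̄} to the variables outside S, where f is computed by a DNF T₁ ∨ ⋯ ∨ T_s. Then there exists a set 𝒯 of at most |S| terms of f, each of which is neither fixed to 0 nor to 1 by x_{S̄}, whose union of variable sets contains S. -/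
open Finset

lemma exists_tree_of_depOn {n : ℕ} (A : Finset (Fin n)) :
    ∀ g : (Fin n → Bool) → Bool,
    (∀ x y, (∀ i ∈ A, x i = y i) → g x = g y) →
    ∃ t : DTree n, (∀ x, t.eval x = g x) ∧ t.depth ≤ A.card := by
  induction A using Finset.induction_on with
  | empty =>
    intro g h
    exact ⟨.leaf (g fun _ => false), fun x => (h _ x (by simp)), by simp [DTree.depth]⟩
  | @insert i B hiB ih =>
    intro g h
    have hb : ∀ b : Bool, ∀ x y, (∀ j ∈ B, x j = y j) →
        g (Function.update x i b) = g (Function.update y i b) := by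
      intro b x y hxy
      apply h
      intro j hj
      by_cases hji : j = i
      · subst hji; simp
      · have hjB : j ∈ B := by
          rcases Finset.mem_insert.mp hj with h1 | h1
          · exact absurd h1 hji
          · exact h1
        simp [Function.update_of_ne hji, hxy j hjB]
    obtain ⟨t₁, he₁, hd₁⟩ := ih _ (hb true)
    obtain ⟨t₀, he₀, hd₀⟩ := ih _ (hb false)
    refine ⟨.node i t₁ t₀, ?_, ?_⟩
    · intro x
      simp only [DTree.eval]
      cases hxi : x i
      · rw [if_neg (by simp [hxi]), he₀,
          show Function.update x i false = x from by rw [← hxi, Function.update_eq_self]]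
      · rw [if_pos (by simp [hxi]), he₁,
          show Function.update x i true = x from by rw [← hxi, Function.update_eq_self]]
    · simp only [DTree.depth, Finset.card_insert_of_notMem hiB]
      omega

/-- If the restriction of a DNF `f` to free variables `S` at `xbar`
has full decision tree depth `|S|`, then `S` is covered by the variable sets of at most
`|S|` terms, each of which is alive (neither falsified nor already satisfied) under
`xbar`. -/
theorem stmt16 {n s : ℕ} (f : (Fin n → Bool) → Bool) (terms : Fin s → Term n)
    (hf : ∀ x, f x = true ↔ dnfEval terms x)
    (S : Finset (Fin n)) (xbar : Fin n → Bool)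
    (hDT : DT (restrict f S xbar) = S.card) :
    ∃ 𝒯 : Finset (Fin s), 𝒯.card ≤ S.card ∧
      (∀ j ∈ 𝒯, (∀ i ∈ (terms j).1, i ∉ S → xbar i = (terms j).2 i) ∧
        ((terms j).1 ∩ S).Nonempty) ∧
      S ⊆ 𝒯.biUnion fun j => (terms j).1 := by
  classical
  have key : ∀ i ∈ S, ∃ j : Fin s, i ∈ (terms j).1 ∧
      (∀ i' ∈ (terms j).1, i' ∉ S → xbar i' = (terms j).2 i') := by
    intro i hi
    by_contra hno
    push_neg at hno
    have aux : ∀ x y : Fin n → Bool, (∀ j ∈ S.erase i, x j = y j) → ∀ j : Fin s,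
        termSat (terms j) (fun k => if k ∈ S then x k else xbar k) →
        termSat (terms j) (fun k => if k ∈ S then y k else xbar k) := by
      intro x y hxy j hsat i' hi'
      have hnotmem : i ∉ (terms j).1 := by
        intro hmem
        obtain ⟨i'', hi''mem, hi''S, hne⟩ := hno j hmem
        have := hsat i'' hi''mem
        simp only [if_neg hi''S] at this
        exact hne this
      by_cases hS : i' ∈ S
      · simp only [if_pos hS]
        have hne : i' ≠ i := fun h => hnotmem (h ▸ hi')
        rw [← hxy i' (Finset.mem_erase.mpr ⟨hne, hS⟩)]
        have := hsat i' hi'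
        simpa [hS] using this
      · simp only [if_neg hS]
        have := hsat i' hi'
        simpa [hS] using this
    have hdep : ∀ x y, (∀ j ∈ S.erase i, x j = y j) →
        restrict f S xbar x = restrict f S xbar y := by
      intro x y hxy
      simp only [_root_.restrict]
      rw [Bool.eq_iff_iff, hf, hf]
      exact ⟨fun ⟨j, hj⟩ => ⟨j, aux x y hxy j hj⟩,
        fun ⟨j, hj⟩ => ⟨j, aux y x (fun k hk => (hxy k hk).symm) j hj⟩⟩
    obtain ⟨t, ht, htd⟩ := exists_tree_of_depOn (S.erase i) _ hdep
    have hle : DT (restrict f S xbar) ≤ (S.erase i).card := Nat.sInf_le ⟨t, ht, htd⟩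
    rw [hDT, Finset.card_erase_of_mem hi] at hle
    have hpos := Finset.card_pos.mpr ⟨i, hi⟩
    omega
  choose c hc1 hc2 using key
  refine ⟨S.attach.image (fun i => c i.1 i.2), ?_, ?_, ?_⟩
  · exact (Finset.card_image_le).trans (by simp)
  · intro j hj
    obtain ⟨⟨i, hi⟩, -, rfl⟩ := Finset.mem_image.mp hj
    exact ⟨hc2 i hi, ⟨i, Finset.mem_inter.mpr ⟨hc1 i hi, hi⟩⟩⟩
  · intro i hi
    exact Finset.mem_biUnion.mpr ⟨c i hi,
      Finset.mem_image.mpr ⟨⟨i, hi⟩, Finset.mem_attach _ _, rfl⟩, hc1 i hi⟩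
end

section
/- Let f : {-1,1}^n → {0,1} be a monotone DNF f = T₁ ∨ ⋯ ∨ T_s (all literals positive), let S ⊆ [n], and suppose x_{S̄} is an assignment of the variables outside S such that the restriction f_{S|x_{S̄}} has decision tree depth |S|. Then setting every variable of S to true yields a full input x with the property that every variable of S lies in some term of f satisfied by x. -/
open Finset

/-- If `g` depends only on coordinates in `T`, it has decision-tree depth ≤ `|T|`. -/
theorem dtree_of_depends {n : ℕ} (T : Finset (Fin n)) :
    ∀ g : (Fin n → Bool) → Bool, (∀ x y, (∀ i ∈ T, x i = y i) → g x = g y) →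
    ∃ t : DTree n, (∀ x, t.eval x = g x) ∧ t.depth ≤ T.card := by
  classical
  induction T using Finset.induction_on with
  | empty =>
    intro g hg
    exact ⟨.leaf (g (fun _ => false)),
      fun x => hg (fun _ => false) x (by simp), le_refl _⟩
  | @insert a T' ha ih =>
    intro g hg
    have hdep : ∀ b : Bool, ∀ x y, (∀ i ∈ T', x i = y i) →
        g (Function.update x a b) = g (Function.update y a b) := by
      intro b x y hxy
      apply hg
      intro i hiT
      rcases Finset.mem_insert.mp hiT with h | h
      · subst h; simp
      · have hia : i ≠ a := fun he => ha (he ▸ h)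
        rw [Function.update_of_ne hia, Function.update_of_ne hia]
        exact hxy i h
    obtain ⟨t₁, h₁, d₁⟩ := ih (fun x => g (Function.update x a true)) (hdep true)
    obtain ⟨t₀, h₀, d₀⟩ := ih (fun x => g (Function.update x a false)) (hdep false)
    refine ⟨.node a t₁ t₀, ?_, ?_⟩
    · intro x
      have hx : Function.update x a (x a) = x := Function.update_eq_self a x
      simp only [DTree.eval]
      cases hxa : x a
      · simp only [Bool.false_eq_true, if_false, h₀]
        rw [← hxa, hx]
      · simp only [if_true, h₁]
        rw [← hxa, hx]
    · simp only [DTree.depth, Finset.card_insert_of_notMem ha]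
      omega

/-- For a monotone DNF (terms are sets of positively occurring
variables), if the restriction of `f` to free variables `S` at `xbar` has full decision
tree depth `|S|`, then setting every variable of `S` to true yields an input under which
every variable of `S` lies in a satisfied term. -/
theorem stmt19 {n s : ℕ} (f : (Fin n → Bool) → Bool) (terms : Fin s → Finset (Fin n))
    (hf : ∀ x, f x = true ↔ ∃ j, ∀ i ∈ terms j, x i = true)
    (S : Finset (Fin n)) (xbar : Fin n → Bool)
    (hDT : DT (restrict f S xbar) = S.card) :
    ∀ i ∈ S, ∃ j, i ∈ terms j ∧
      ∀ i' ∈ terms j, (if i' ∈ S then true else xbar i') = true := by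
  classical
  intro i hi
  set g := restrict f S xbar with hgdef
  have hgval : ∀ z : Fin n → Bool,
      g z = true ↔ ∃ j, ∀ i' ∈ terms j, (if i' ∈ S then z i' else xbar i') = true := by
    intro z
    rw [hgdef]
    unfold _root_.restrict
    rw [hf]
  -- Step 1: g depends on coordinate i
  have hdep : ∃ y : Fin n → Bool,
      g (Function.update y i true) ≠ g (Function.update y i false) := by
    by_contra hcon
    push_neg at hcon
    have hindep : ∀ (z : Fin n → Bool) (b : Bool), g (Function.update z i b) = g z := by
      intro z b
      cases hb : z i with
      | false =>
        have hz : Function.update z i false = z := by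
          rw [← hb]; exact Function.update_eq_self i z
        cases b
        · rw [hz]
        · rw [hcon z, hz]
      | true =>
        have hz : Function.update z i true = z := by
          rw [← hb]; exact Function.update_eq_self i z
        cases b
        · rw [← hcon z, hz]
        · rw [hz]
    have honly : ∀ x y : Fin n → Bool, (∀ i' ∈ S.erase i, x i' = y i') → g x = g y := by
      intro x y hxy
      have h1 : g x = g (Function.update x i (y i)) := (hindep x (y i)).symm
      have h2 : g (Function.update x i (y i)) = g y := by
        have heq : (fun i' => if i' ∈ S then Function.update x i (y i) i' else xbar i')
             = (fun i' => if i' ∈ S then y i' else xbar i') := by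
          funext i'
          by_cases hiS : i' ∈ S
          · simp only [hiS, if_true]
            by_cases hii : i' = i
            · subst hii; simp
            · rw [Function.update_of_ne hii]
              exact hxy i' (Finset.mem_erase.mpr ⟨hii, hiS⟩)
          · simp [hiS]
        rw [hgdef]
        unfold _root_.restrict
        rw [heq]
      rw [h1, h2]
    obtain ⟨t, ht, hd⟩ := dtree_of_depends (S.erase i) g honly
    have hle : DT g ≤ (S.erase i).card := Nat.sInf_le ⟨t, ht, hd⟩
    rw [Finset.card_erase_of_mem hi] at hle
    have hpos : 0 < S.card := Finset.card_pos.mpr ⟨i, hi⟩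
    omega
  obtain ⟨y, hy⟩ := hdep
  -- Step 2: orientation via monotonicity
  have hmono : g (Function.update y i false) = true → g (Function.update y i true) = true := by
    intro hu
    rw [hgval] at hu ⊢
    obtain ⟨j, hj⟩ := hu
    refine ⟨j, fun i' hi' => ?_⟩
    have h := hj i' hi'
    by_cases hii : i' = i
    · subst hii; simp [hi]
    · rwa [Function.update_of_ne hii] at h ⊢
  have hvt : g (Function.update y i true) = true := by
    rcases Bool.eq_false_or_eq_true (g (Function.update y i false)) with hu | hu
    · exact hmono hu
    · rcases Bool.eq_false_or_eq_true (g (Function.update y i true)) with hv | hv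
      · exact hv
      · exact absurd (hv.trans hu.symm) hy
  have hut : g (Function.update y i false) = false := by
    rcases Bool.eq_false_or_eq_true (g (Function.update y i false)) with hu | hu
    · exact absurd (hvt.trans hu.symm) hy
    · exact hu
  -- Step 3: extract term containing i
  rw [hgval] at hvt
  obtain ⟨j, hj⟩ := hvt
  have hij : i ∈ terms j := by
    by_contra hnot
    have hgu : g (Function.update y i false) = true := by
      rw [hgval]
      refine ⟨j, fun i' hi' => ?_⟩
      have h := hj i' hi'
      have hii : i' ≠ i := fun he => hnot (he ▸ hi')
      rwa [Function.update_of_ne hii] at h ⊢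
    rw [hgu] at hut
    exact absurd hut (by simp)
  refine ⟨j, hij, fun i' hi' => ?_⟩
  have h := hj i' hi'
  by_cases hiS : i' ∈ S
  · simp [hiS]
  · simpa [hiS] using h
end
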